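/- (Asymptotics in the case σ_j = 0.) Let (u₁,…,u_p) be a solution of the escape-region equations and let 1 ≤ j < p be such that σ_j = 0 (the constant term of u_j is 0). Then u_j² and X^{2μ}·(u₁ − u_{j+1}) have the same leading term: u_j = 0 if and only if u_{j+1} = u₁, and otherwise 2·ord(u_j) = 2μ + ord(u₁ − u_{j+1}) and the square of the leading coefficient of u_j equals the leading coefficient of u₁ − u_{j+1}. (In other words u_j ∼ ±ξ·√(u₁ − u_{j+1}).) -/

import Mathlib

/-- `f` has leading term (leading monomial) `β·X^q`: the coefficient of `X^q` is `β ≠ 0`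
and all lower coefficients vanish. -/
def HasLeadingTerm (f : PowerSeries ℂ) (β : ℂ) (q : ℕ) : Prop :=
  β ≠ 0 ∧ PowerSeries.coeff q f = β ∧ ∀ n < q, PowerSeries.coeff n f = 0

/-- `(u 1, …, u p)` is a solution of the escape-region equations of period `p`
(where `X` plays the role of `𝔱^{1/μ}`, i.e. of `ξ^{1/μ}` with `ξ = 1/(3a)`):
`u p = 0` and `X^{2μ}(u_{j+1} − u₁) = u_j²(u_j − 1)` for `1 ≤ j < p`. -/
def IsEscapeSolution (p μ : ℕ) (u : ℕ → PowerSeries ℂ) : Prop :=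
  u p = 0 ∧ ∀ j, 1 ≤ j → j < p →
    (PowerSeries.X : PowerSeries ℂ) ^ (2 * μ) * (u (j + 1) - u 1)
      = (u j) ^ 2 * (u j - 1)

/-- The error `E_j(w) = X^{2μ}(w_{j+1} − w₁) − w_j²(w_j − 1)`. -/
noncomputable def Err (μ : ℕ) (w : ℕ → PowerSeries ℂ) (j : ℕ) : PowerSeries ℂ :=
  (PowerSeries.X : PowerSeries ℂ) ^ (2 * μ) * (w (j + 1) - w 1) - (w j) ^ 2 * (w j - 1)

lemma coeff_sq_of_low_vanish (f : PowerSeries ℂ) (q : ℕ)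
    (h : ∀ n < q, PowerSeries.coeff n f = 0) :
    PowerSeries.coeff (q + q) (f * f) = (PowerSeries.coeff q f) ^ 2 := by
  rw [PowerSeries.coeff_mul]
  rw [Finset.sum_eq_single (q, q)]
  · ring
  · rintro ⟨i, j⟩ hij hne
    replace hij : i + j = q + q := by simpa using hij
    rcases lt_or_ge i q with hi | hi
    · rw [h i hi, zero_mul]
    · have hj : j < q := by
        rcases lt_or_ge j q with hj | hj
        · exact hj
        · exfalso; apply hne
          have : i = q := by omega
          have : j = q := by omega
          simp_all
      rw [h j hj, mul_zero]
  · intro h'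
    simp [Finset.mem_antidiagonal] at h'

/-- **Asymptotics in the case `σ_j = 0`.** If the constant term of `u_j` is `0`, then
`u_j²` and `X^{2μ}(u₁ − u_{j+1})` have the same leading term: `u_j = 0` iff
`u_{j+1} = u₁`, and otherwise `2·ord(u_j) = 2μ + ord(u₁ − u_{j+1})` with the square of
the leading coefficient of `u_j` equal to the leading coefficient of `u₁ − u_{j+1}`
(i.e. `u_j ∼ ±ξ·√(u₁ − u_{j+1})`). -/
theorem asymptotics_sigma_zero (p μ : ℕ) (hp : 1 ≤ p) (hμ : 1 ≤ μ)
    (u : ℕ → PowerSeries ℂ) (hu : IsEscapeSolution p μ u)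
    (j : ℕ) (hj1 : 1 ≤ j) (hjp : j < p)
    (hσ : PowerSeries.constantCoeff (u j) = 0) :
    (u j = 0 ↔ u (j + 1) = u 1) ∧
    (u j ≠ 0 → ∃ (β γ : ℂ) (q k : ℕ),
      HasLeadingTerm (u j) β q ∧
      HasLeadingTerm (u 1 - u (j + 1)) γ k ∧
      2 * q = 2 * μ + k ∧ β ^ 2 = γ) := by
  obtain ⟨hup, heq⟩ := hu
  have key := heq j hj1 hjp
  set f := u j with hf
  have hfm1 : f - 1 ≠ 0 := by
    intro h
    have : PowerSeries.constantCoeff (f - 1) = 0 := by rw [h]; simp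
    rw [map_sub, hσ, map_one] at this
    norm_num at this
  have hXpow : (PowerSeries.X : PowerSeries ℂ) ^ (2 * μ) ≠ 0 :=
    pow_ne_zero _ PowerSeries.X_ne_zero
  constructor
  · constructor
    · intro h
      rw [h] at key
      have key3 : (PowerSeries.X : PowerSeries ℂ) ^ (2 * μ) * (u (j + 1) - u 1) = 0 := by
        rw [key]; ring
      have : u (j + 1) - u 1 = 0 := by
        rcases mul_eq_zero.mp key3 with h' | h'
        · exact absurd h' hXpow
        · exact h'
      linear_combination this
    · intro h
      rw [h, sub_self, mul_zero] at key
      have : f ^ 2 = 0 ∨ f - 1 = 0 := mul_eq_zero.mp key.symm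
      rcases this with h' | h'
      · exact pow_eq_zero_iff (n := 2) (by norm_num) |>.mp h'
      · exact absurd h' hfm1
  · intro hfne
    have hg_ne : u 1 - u (j + 1) ≠ 0 := by
      intro h
      have h1 : u (j + 1) = u 1 := by linear_combination -h
      rw [h1, sub_self, mul_zero] at key
      rcases mul_eq_zero.mp key.symm with h' | h'
      · exact hfne (pow_eq_zero_iff (n := 2) (by norm_num) |>.mp h')
      · exact hfm1 h'
    set g := u 1 - u (j + 1) with hg
    -- orders
    have hford : f.order ≠ ⊤ := fun h => hfne (PowerSeries.order_eq_top.mp h)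
    obtain ⟨q, hq⟩ : ∃ q : ℕ, f.order = (q : ℕ∞) := by
      lift f.order to ℕ using hford with q hq
      exact ⟨q, rfl⟩
    have hgord : g.order ≠ ⊤ := fun h => hg_ne (PowerSeries.order_eq_top.mp h)
    obtain ⟨k, hk⟩ : ∃ k : ℕ, g.order = (k : ℕ∞) := by
      lift g.order to ℕ using hgord with k hk
      exact ⟨k, rfl⟩
    have hqlt : PowerSeries.coeff q f ≠ 0 ∧ ∀ i < q, PowerSeries.coeff i f = 0 :=
      PowerSeries.order_eq_nat.mp hq
    have hklt : PowerSeries.coeff k g ≠ 0 ∧ ∀ i < k, PowerSeries.coeff i g = 0 :=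
      PowerSeries.order_eq_nat.mp hk
    have hq1 : 1 ≤ q := by
      by_contra h
      have : q = 0 := by omega
      rw [this] at hqlt
      exact hqlt.1 (by simpa [PowerSeries.coeff_zero_eq_constantCoeff] using hσ)
    -- rewrite equation:  X^{2μ} * g = f^2 * (1 - f)
    have key2 : (PowerSeries.X : PowerSeries ℂ) ^ (2 * μ) * g = f ^ 2 * (1 - f) := by
      rw [hg]
      linear_combination -key
    -- order computation
    have hord1 : (1 - f).order = 0 := by
      have : (1 - f).order = (0 : ℕ) := by
        rw [PowerSeries.order_eq_nat]
        refine ⟨?_, by omega⟩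
        rw [map_sub, PowerSeries.coeff_zero_eq_constantCoeff, map_one, hσ]
        norm_num
      simpa using this
    have hqk : 2 * q = 2 * μ + k := by
      have h1 := congrArg PowerSeries.order key2
      rw [PowerSeries.order_mul, PowerSeries.order_mul, PowerSeries.order_X_pow,
        hord1, sq, PowerSeries.order_mul, hk, hq, add_zero] at h1
      have h2 : ((2 * μ + k : ℕ) : ℕ∞) = ((q + q : ℕ) : ℕ∞) := by push_cast; exact h1
      have := Nat.cast_injective (R := ℕ∞) h2
      omega
    -- coefficient computation at degree k + 2μ = 2q
    have hdeg : k + 2 * μ = q + q := by omega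
    have hc := congrArg (PowerSeries.coeff (k + 2 * μ)) key2
    rw [PowerSeries.coeff_X_pow_mul] at hc
    have hcR : PowerSeries.coeff (k + 2 * μ) (f ^ 2 * (1 - f))
        = (PowerSeries.coeff q f) ^ 2 := by
      have expand : f ^ 2 * (1 - f) = f * f - f * f * f := by ring
      rw [expand, map_sub, hdeg, coeff_sq_of_low_vanish f q hqlt.2]
      have h3 : PowerSeries.coeff (q + q) (f * f * f) = 0 := by
        apply PowerSeries.coeff_of_lt_order
        rw [PowerSeries.order_mul, PowerSeries.order_mul, hq]
        have : (q + q : ℕ) < q + q + q := by omega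
        exact_mod_cast this
      rw [h3, sub_zero]
    rw [hcR] at hc
    exact ⟨PowerSeries.coeff q f, PowerSeries.coeff k g, q, k,
      ⟨hqlt.1, rfl, hqlt.2⟩, ⟨hklt.1, rfl, hklt.2⟩, hqk, hc.symm⟩
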